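/- Frontloading preserves implementability: if (s,p) is an implementable contract, then (s, p*(s)) is also implementable, it satisfies W_{t+1}(s, p*(s)) = w(s_t)/(1−δ) for every t ≥ 0 (all (E-IC) constraints bind), and Π_0(s, p*(s)) ≥ Π_0(s,p). -/

import Mathlib

open Set Filter

/-- Principal's continuation value `Π_t(s,p) = Σ_{τ=t}^∞ δ^{τ−t}(π(s_τ) − p_τ)`. -/
noncomputable def PiVal (δ : ℝ) (π : ℝ → ℝ) (s p : ℕ → ℝ) (t : ℕ) : ℝ :=
  ∑' k : ℕ, δ ^ k * (π (s (t + k)) - p (t + k))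

/-- Expert's continuation value `W_t(s,p) = Σ_{τ=t}^∞ δ^{τ−t}(w(s_τ) + p_τ)`. -/
noncomputable def WVal (δ : ℝ) (w : ℝ → ℝ) (s p : ℕ → ℝ) (t : ℕ) : ℝ :=
  ∑' k : ℕ, δ ^ k * (w (s (t + k)) + p (t + k))

/-- A contract: `s` takes values in `[0,1]`, `s 0 = 0`, and `t ↦ δ^t·p_t` is summable. -/
def IsContract (δ : ℝ) (s p : ℕ → ℝ) : Prop :=
  (∀ t, s t ∈ Set.Icc (0 : ℝ) 1) ∧ s 0 = 0 ∧ Summable fun t => δ ^ t * p t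

/-- Implementability: feasibility (monotone `s`, nonnegative `p`) plus (P-IC) and (E-IC). -/
def Implementable (δ : ℝ) (π w : ℝ → ℝ) (s p : ℕ → ℝ) : Prop :=
  IsContract δ s p ∧ Monotone s ∧ (∀ t, 0 ≤ p t) ∧
  (∀ t, π (s t) / (1 - δ) ≤ PiVal δ π s p t) ∧
  (∀ t, w (s t) / (1 - δ) ≤ WVal δ w s p (t + 1))

/-- An optimal contract maximizes the principal's time-0 profit among implementable contracts. -/
def Optimal (δ : ℝ) (π w : ℝ → ℝ) (s p : ℕ → ℝ) : Prop :=
  Implementable δ π w s p ∧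
  ∀ s' p' : ℕ → ℝ, Implementable δ π w s' p' → PiVal δ π s' p' 0 ≤ PiVal δ π s p 0

/-- The frontloaded payment scheme `p*(s)`: `p*_0 = 0`, `p*_t = (w(s_{t−1}) − w(s_t))/(1−δ)` for `t ≥ 1`. -/
noncomputable def payStar (δ : ℝ) (w : ℝ → ℝ) (s : ℕ → ℝ) (t : ℕ) : ℝ :=
  if t = 0 then 0 else (w (s (t - 1)) - w (s t)) / (1 - δ)

lemma aux_summable_bdd {δ : ℝ} (h0 : 0 ≤ δ) (h1 : δ < 1) {f : ℕ → ℝ} {M : ℝ}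
    (hf : ∀ k, |f k| ≤ M) : Summable fun k => δ ^ k * f k := by
  refine Summable.of_norm_bounded (g := fun k => M * δ ^ k)
    ((summable_geometric_of_lt_one h0 h1).mul_left M) (fun k => ?_)
  have hp : (0:ℝ) ≤ δ ^ k := pow_nonneg h0 k
  have := hf k
  rw [Real.norm_eq_abs, abs_mul, abs_pow, abs_of_nonneg h0]
  calc δ ^ k * |f k| ≤ δ ^ k * M := mul_le_mul_of_nonneg_left this hp
    _ = M * δ ^ k := mul_comm _ _

lemma aux_shift_summable {δ : ℝ} (hδ : δ ≠ 0) {p : ℕ → ℝ}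
    (h : Summable fun t => δ ^ t * p t) (t : ℕ) :
    Summable fun k => δ ^ k * p (t + k) := by
  have h1 : Summable fun k => δ ^ (k + t) * p (k + t) := (summable_nat_add_iff t).mpr h
  have h2 : Summable fun k => δ ^ t * (δ ^ k * p (t + k)) := by
    refine h1.congr fun k => ?_
    rw [add_comm k t, pow_add, mul_assoc]
  exact (summable_mul_left_iff (pow_ne_zero t hδ)).mp h2

lemma aux_tsum_telescope {g : ℕ → ℝ} (hs : Summable fun k => g k - g (k + 1))
    (h0 : Tendsto g atTop (nhds 0)) : ∑' k, (g k - g (k + 1)) = g 0 := by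
  have h1 := hs.hasSum.tendsto_sum_nat
  simp only [Finset.sum_range_sub' g] at h1
  have h3 : Tendsto (fun n => g 0 - g n) atTop (nhds (g 0 - 0)) := tendsto_const_nhds.sub h0
  rw [sub_zero] at h3
  exact tendsto_nhds_unique h1 h3

/-- Frontloading preserves implementability, binds all (E-IC), and
weakly improves the principal's time-0 profit. -/
theorem frontloading_preserves_implementability
    (δ : ℝ) (hδ : δ ∈ Set.Ioo (0 : ℝ) 1) (π w : ℝ → ℝ)
    (hπc : ContinuousOn π (Set.Icc 0 1)) (hwc : ContinuousOn w (Set.Icc 0 1))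
    (hπm : StrictMonoOn π (Set.Icc 0 1)) (hwa : StrictAntiOn w (Set.Icc 0 1))
    (hGm : StrictMonoOn (fun x => π x + w x) (Set.Icc 0 1))
    (s p : ℕ → ℝ) (himp : Implementable δ π w s p) :
    Implementable δ π w s (payStar δ w s) ∧
    (∀ t : ℕ, WVal δ w s (payStar δ w s) (t + 1) = w (s t) / (1 - δ)) ∧
    PiVal δ π s p 0 ≤ PiVal δ π s (payStar δ w s) 0 := by
  obtain ⟨⟨hs01, hs0, hpsum⟩, hmono, hpnn, hPIC, hEIC⟩ := himp
  obtain ⟨hδ0, hδ1⟩ := hδ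
  have h1δ : (0:ℝ) < 1 - δ := by linarith
  have hwanti : AntitoneOn w (Icc 0 1) := hwa.antitoneOn
  have hπmono : MonotoneOn π (Icc 0 1) := hπm.monotoneOn
  have h01 : (0:ℝ) ∈ Icc (0:ℝ) 1 := ⟨le_refl 0, zero_le_one⟩
  have h11 : (1:ℝ) ∈ Icc (0:ℝ) 1 := ⟨zero_le_one, le_refl 1⟩
  set Mw : ℝ := max |w 0| |w 1| with hMw
  set Mπ : ℝ := max |π 0| |π 1| with hMπ
  -- bounds on w ∘ s and π ∘ s
  have hwb : ∀ t, |w (s t)| ≤ Mw := by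
    intro t
    have h := hs01 t
    have hl : w 1 ≤ w (s t) := hwanti h h11 h.2
    have hr : w (s t) ≤ w 0 := hwanti h01 h h.1
    have h1 := neg_abs_le (w 1); have h2 := le_max_right |w 0| |w 1|
    have h3 := le_abs_self (w 0); have h4 := le_max_left |w 0| |w 1|
    rw [abs_le]; constructor <;> simp only [hMw] at * <;> linarith
  have hπb : ∀ t, |π (s t)| ≤ Mπ := by
    intro t
    have h := hs01 t
    have hl : π 0 ≤ π (s t) := hπmono h01 h h.1
    have hr : π (s t) ≤ π 1 := hπmono h h11 h.2
    have h1 := neg_abs_le (π 0); have h2 := le_max_left |π 0| |π 1|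
    have h3 := le_abs_self (π 1); have h4 := le_max_right |π 0| |π 1|
    rw [abs_le]; constructor <;> simp only [hMπ] at * <;> linarith
  -- w (s (t-1)) ≥ w (s t) monotonicity for payStar nonneg
  have hwdec : ∀ a b : ℕ, a ≤ b → w (s b) ≤ w (s a) :=
    fun a b hab => hwanti (hs01 a) (hs01 b) (hmono hab)
  have hpsnn : ∀ t, 0 ≤ payStar δ w s t := by
    intro t
    rcases t with _ | k
    · simp [payStar]
    · have : w (s (k+1)) ≤ w (s k) := hwdec k (k+1) (Nat.le_succ k)
      simp only [payStar, Nat.succ_ne_zero, if_false, Nat.add_sub_cancel]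
      exact div_nonneg (by linarith) h1δ.le
  -- bound on payStar
  have hpsb : ∀ t, |payStar δ w s t| ≤ 2 * Mw / (1 - δ) := by
    intro t
    have hMw0 : 0 ≤ Mw := le_trans (abs_nonneg _) (le_max_left _ _)
    rcases t with _ | k
    · rw [show payStar δ w s 0 = 0 by simp [payStar], abs_zero]
      have h2 : (0:ℝ) ≤ 2 * Mw := by linarith
      exact div_nonneg h2 h1δ.le
    · simp only [payStar, Nat.succ_ne_zero, if_false, Nat.add_sub_cancel]
      rw [abs_div, abs_of_pos h1δ]
      have h1 := abs_le.mp (hwb k); have h2 := abs_le.mp (hwb (k+1))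
      have hle : |w (s k) - w (s (k+1))| ≤ 2 * Mw := by
        rw [abs_le]; constructor <;> linarith [h1.1, h1.2, h2.1, h2.2]
      gcongr
  have hMw0 : 0 ≤ Mw := le_trans (abs_nonneg _) (le_max_left _ _)
  have hMπ0 : 0 ≤ Mπ := le_trans (abs_nonneg _) (le_max_left _ _)
  -- summabilities
  have Sw : ∀ t, Summable fun k => δ ^ k * w (s (t + k)) :=
    fun t => aux_summable_bdd hδ0.le hδ1 (fun k => hwb _)
  have Sπ : ∀ t, Summable fun k => δ ^ k * π (s (t + k)) :=
    fun t => aux_summable_bdd hδ0.le hδ1 (fun k => hπb _)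
  have Sp : ∀ t, Summable fun k => δ ^ k * p (t + k) :=
    aux_shift_summable (ne_of_gt hδ0) hpsum
  have Sps : ∀ t, Summable fun k => δ ^ k * payStar δ w s (t + k) :=
    fun t => aux_summable_bdd hδ0.le hδ1 (fun k => hpsb _)
  have SW : ∀ t, Summable fun k => δ ^ k * (w (s (t + k)) + p (t + k)) :=
    fun t => ((Sw t).add (Sp t)).congr (fun k => (mul_add _ _ _).symm)
  have SWs : ∀ t, Summable fun k => δ ^ k * (w (s (t + k)) + payStar δ w s (t + k)) :=
    fun t => ((Sw t).add (Sps t)).congr (fun k => (mul_add _ _ _).symm)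
  have SPi : ∀ t, Summable fun k => δ ^ k * (π (s (t + k)) - p (t + k)) :=
    fun t => ((Sπ t).sub (Sp t)).congr (fun k => (mul_sub _ _ _).symm)
  have SPis : ∀ t, Summable fun k => δ ^ k * (π (s (t + k)) - payStar δ w s (t + k)) :=
    fun t => ((Sπ t).sub (Sps t)).congr (fun k => (mul_sub _ _ _).symm)
  -- the key telescoping identity : W*_{t+1} = w(s_t)/(1-δ)
  have hWstar : ∀ t : ℕ, WVal δ w s (payStar δ w s) (t + 1) = w (s t) / (1 - δ) := by
    intro t
    set g : ℕ → ℝ := fun k => δ ^ k * w (s (t + k)) / (1 - δ) with hg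
    have hterm : ∀ k, δ ^ k * (w (s (t + 1 + k)) + payStar δ w s (t + 1 + k))
        = g k - g (k + 1) := by
      intro k
      have hne : t + 1 + k ≠ 0 := by omega
      have hidx : t + 1 + k - 1 = t + k := by omega
      have hidx2 : t + (k + 1) = t + 1 + k := by omega
      simp only [hg, payStar, if_neg hne, hidx, hidx2, pow_succ]
      field_simp
      ring
    have hgt : Tendsto g atTop (nhds 0) := by
      have hδt : Tendsto (fun k : ℕ => δ ^ k) atTop (nhds 0) :=
        tendsto_pow_atTop_nhds_zero_of_lt_one hδ0.le hδ1
      have hb : Tendsto (fun k : ℕ => Mw / (1 - δ) * δ ^ k) atTop (nhds 0) := by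
        have := hδt.const_mul (Mw / (1 - δ))
        simpa using this
      refine squeeze_zero_norm (fun k => ?_) hb
      have hp : (0:ℝ) ≤ δ ^ k := pow_nonneg hδ0.le k
      have := hwb (t + k)
      rw [hg]
      simp only [Real.norm_eq_abs, abs_div, abs_mul, abs_pow, abs_of_nonneg hδ0.le,
        abs_of_pos h1δ]
      rw [div_le_iff₀ h1δ]
      have h2 : δ ^ k * |w (s (t + k))| ≤ δ ^ k * Mw := mul_le_mul_of_nonneg_left this hp
      calc δ ^ k * |w (s (t + k))| ≤ δ ^ k * Mw := h2
        _ = Mw / (1 - δ) * δ ^ k * (1 - δ) := by field_simp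
    have hsum : Summable fun k => g k - g (k + 1) := (SWs (t + 1)).congr hterm
    have : WVal δ w s (payStar δ w s) (t + 1) = ∑' k, (g k - g (k + 1)) :=
      tsum_congr hterm
    rw [this, aux_tsum_telescope hsum hgt, hg]
    simp
  -- recursion at time 0 for a general payment stream
  have hWrec : ∀ q : ℕ → ℝ, (Summable fun k => δ ^ k * (w (s (0 + k)) + q (0 + k))) →
      WVal δ w s q 0 = (w (s 0) + q 0) + δ * WVal δ w s q 1 := by
    intro q hq
    have h0 := Summable.tsum_eq_zero_add hq
    rw [WVal, h0]
    have htail : ∀ k : ℕ, δ ^ (k + 1) * (w (s (0 + (k + 1))) + q (0 + (k + 1)))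
        = δ * (δ ^ k * (w (s (1 + k)) + q (1 + k))) := by
      intro k
      have : 0 + (k + 1) = 1 + k := by omega
      rw [this, pow_succ]; ring
    rw [tsum_congr htail, tsum_mul_left]
    simp [WVal]
  -- W*_0 = w(s_0)/(1-δ)
  have hWstar0 : WVal δ w s (payStar δ w s) 0 = w (s 0) / (1 - δ) := by
    rw [hWrec _ (SWs 0)]
    have h1 : payStar δ w s 0 = 0 := by simp [payStar]
    have h2 : WVal δ w s (payStar δ w s) 1 = w (s 0) / (1 - δ) := hWstar 0
    rw [h1, h2]
    field_simp
    ring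
  -- W_t(s,p) ≥ W*_t for all t
  have hWle : ∀ t, WVal δ w s (payStar δ w s) t ≤ WVal δ w s p t := by
    intro t
    rcases t with _ | u
    · rw [hWstar0, hWrec p (SW 0)]
      have h1 := hEIC 0
      simp only [zero_add] at h1
      have h2 := hpnn 0
      have key : w (s 0) / (1 - δ) = w (s 0) + δ * (w (s 0) / (1 - δ)) := by
        field_simp
        ring
      have h3 := mul_le_mul_of_nonneg_left h1 hδ0.le
      linarith
    · rw [hWstar u]
      exact hEIC u
  -- Pi decomposition : Pi_t + W_t = G_t
  have hPiW : ∀ (q : ℕ → ℝ) (t : ℕ),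
      (Summable fun k => δ ^ k * (π (s (t + k)) - q (t + k))) →
      (Summable fun k => δ ^ k * (w (s (t + k)) + q (t + k))) →
      PiVal δ π s q t = (∑' k : ℕ, δ ^ k * (π (s (t + k)) + w (s (t + k))))
        - WVal δ w s q t := by
    intro q t h1 h2
    have key : (∑' k : ℕ, δ ^ k * (π (s (t + k)) + w (s (t + k))))
        = PiVal δ π s q t + WVal δ w s q t := by
      rw [PiVal, WVal, ← Summable.tsum_add h1 h2]
      exact tsum_congr fun k => by ring
    linarith [key]
  have hPige : ∀ t, PiVal δ π s p t ≤ PiVal δ π s (payStar δ w s) t := by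
    intro t
    rw [hPiW p t (SPi t) (SW t), hPiW (payStar δ w s) t (SPis t) (SWs t)]
    linarith [hWle t]
  -- assemble
  refine ⟨⟨⟨hs01, hs0, ?_⟩, hmono, hpsnn, ?_, ?_⟩, hWstar, hPige 0⟩
  · exact aux_summable_bdd hδ0.le hδ1 (fun k => hpsb k)
  · intro t
    exact le_trans (le_trans (hPIC t) (le_refl _)) (hPige t)
  · intro t
    rw [hWstar t]
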